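/- Let K be a commutative semiring and (Σ,M) an OP alphabet. For every weighted OPA A over (Σ,M) and K there exists a restricted weighted OPA B over (Σ,M) and K with ⟦A⟧=⟦B⟧. Consequently, over a commutative semiring every regular series is strictly regular. -/

import Mathlib

namespace WOP

/-- Precedence relations: yields precedence, equal in precedence, takes precedence. -/
inductive PrecRel where
  | lt | eq | gt
deriving DecidableEq

/-- An operator precedence matrix on `Σ ∪ {#}`, where `none` encodes `#`.
It assigns at most one precedence relation to each ordered pair, with
`# ⋖ a` and `a ⋗ #` for every letter `a`. -/
structure OPM (A : Type) where
  rel : Option A → Option A → Option PrecRel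
  hash_lt : ∀ a : A, rel none (some a) = some .lt
  hash_gt : ∀ a : A, rel (some a) none = some .gt

variable {A B K : Type}

/-- The letter of `#w#` at position `i` (positions `0` and `> |w|` carry `#`, i.e. `none`). -/
def letterAt (w : List A) (i : ℕ) : Option A :=
  if i = 0 then none else w[i - 1]?

section ChainRel

variable (M : OPM A) (L : ℕ → Option A)

mutual
  /-- `ChainMid M L k j`: there are `k = k_s < ... < k_m = j` with
  `L k_s ≐ L k_{s+1} ≐ ... ≐ L k_{m-1} ⋗ L k_m` and the gap condition between
  consecutive elements. -/
  inductive ChainMid : ℕ → ℕ → Prop where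
    | last {k j : ℕ} : M.rel (L k) (L j) = some .gt → ChainGap k j → ChainMid k j
    | step {k k' j : ℕ} : M.rel (L k) (L k') = some .eq → ChainGap k k' →
        ChainMid k' j → ChainMid k j

  /-- The gap condition between consecutive elements of a chain:
  adjacent positions or a chain. -/
  inductive ChainGap : ℕ → ℕ → Prop where
    | adj (k : ℕ) : ChainGap k (k + 1)
    | chain {k k' : ℕ} : Chain k k' → ChainGap k k'

  /-- The chain relation `i ⤳ j`: there are positions `i = k_1 < ... < k_m = j` with
  `L k_1 ⋖ L k_2 ≐ ... ≐ L k_{m-1} ⋗ L k_m` such that consecutive `k`'s are adjacent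
  or themselves related by `⤳`. -/
  inductive Chain : ℕ → ℕ → Prop where
    | mk {i k j : ℕ} : M.rel (L i) (L k) = some .lt → ChainGap i k → ChainMid k j →
        Chain i j
end

end ChainRel

/-- `(Σ,M)^+`: the set of nonempty words compatible with `M`, i.e. `0 ⤳ |w|+1` in `#w#`. -/
def OPWords (M : OPM A) : Set (List A) :=
  {w | w ≠ [] ∧ Chain M (letterAt w) 0 (w.length + 1)}

/-- An (unweighted) operator precedence automaton over the alphabet `A`. -/
structure OPA (A : Type) where
  Q : Type
  fin : Fintype Q
  I : Set Q
  F : Set Q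
  δpush : Set (Q × A × Q)
  δshift : Set (Q × A × Q)
  δpop : Set (Q × Q × Q)

/-- A weighted operator precedence automaton over the alphabet `A` and weights in `K`. -/
structure WOPA (A K : Type) extends OPA A where
  wtpush : Q × A × Q → K
  wtshift : Q × A × Q → K
  wtpop : Q × Q × Q → K

/-- A configuration: a stack of (symbol, state) pairs, a current state,
and the remaining input. -/
structure Config (A Q : Type) where
  stack : List (A × Q)
  state : Q
  input : List A

/-- The moves (transitions) an OPA may take. -/
inductive Move (A Q : Type) where
  | push (q : Q) (b : A) (r : Q)
  | shift (q : Q) (b : A) (r : Q)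
  | pop (q p r : Q)

/-- The topmost stack symbol (`none` = `#` for the empty stack). -/
def topSym {Q : Type} (st : List (A × Q)) : Option A := st.head?.map Prod.fst

/-- One step of an OPA on an OP alphabet `(A, M)`. -/
inductive Exec (M : OPM A) (T : OPA A) : Config A T.Q → Move A T.Q → Config A T.Q → Prop where
  | push {st : List (A × T.Q)} {q r : T.Q} {b : A} {x : List A} :
      M.rel (topSym st) (some b) = some .lt → (q, b, r) ∈ T.δpush →
      Exec M T ⟨st, q, b :: x⟩ (.push q b r) ⟨(b, q) :: st, r, x⟩
  | shift {st : List (A × T.Q)} {p q r : T.Q} {a b : A} {x : List A} :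
      M.rel (some a) (some b) = some .eq → (q, b, r) ∈ T.δshift →
      Exec M T ⟨(a, p) :: st, q, b :: x⟩ (.shift q b r) ⟨(b, p) :: st, r, x⟩
  | pop {st : List (A × T.Q)} {p q r : T.Q} {a : A} {x : List A} :
      M.rel (some a) x.head? = some .gt → (q, p, r) ∈ T.δpop →
      Exec M T ⟨(a, p) :: st, q, x⟩ (.pop q p r) ⟨st, r, x⟩

/-- Execution of a sequence of moves. -/
inductive ExecList (M : OPM A) (T : OPA A) :
    Config A T.Q → List (Move A T.Q) → Config A T.Q → Prop where
  | nil (c : Config A T.Q) : ExecList M T c [] c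
  | cons {c c' c'' : Config A T.Q} {m : Move A T.Q} {ms : List (Move A T.Q)} :
      Exec M T c m c' → ExecList M T c' ms c'' → ExecList M T c (m :: ms) c''

/-- The weight of a move of a weighted OPA. -/
def moveWt [Semiring K] (W : WOPA A K) : Move A W.Q → K
  | .push q b r => W.wtpush (q, b, r)
  | .shift q b r => W.wtshift (q, b, r)
  | .pop q p r => W.wtpop (q, p, r)

/-- The accepting runs of an OPA on `w`: an initial state, a sequence of moves from the
initial configuration (empty stack, whole input) to a final configuration
(empty stack, input read), and the final state reached. -/
def AccRuns (M : OPM A) (T : OPA A) (w : List A) : Set (T.Q × List (Move A T.Q) × T.Q) :=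
  {ρ | ρ.1 ∈ T.I ∧ ρ.2.2 ∈ T.F ∧ ExecList M T ⟨[], ρ.1, w⟩ ρ.2.1 ⟨[], ρ.2.2, []⟩}

/-- The behavior `⟦W⟧(w)`: the sum over all accepting runs of `W` on `w` of the product
(in order) of the weights of the moves of the run. -/
noncomputable def behavior [Semiring K] (M : OPM A) (W : WOPA A K) (w : List A) : K :=
  ∑ᶠ ρ ∈ AccRuns M W.toOPA w, (ρ.2.1.map (moveWt W)).prod

/-- A weighted OPA is restricted (an rwOPA) if all pop weights are `1`. -/
def Restricted [Semiring K] (W : WOPA A K) : Prop := ∀ t ∈ W.δpop, W.wtpop t = 1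

/-- A series `S : (Σ,M)^+ → K` is regular if it is the behavior of some wOPA. -/
def Regular [Semiring K] (M : OPM A) (S : List A → K) : Prop :=
  ∃ W : WOPA A K, ∀ w ∈ OPWords M, S w = behavior M W w

/-- A series is strictly regular if it is the behavior of some restricted wOPA. -/
def StrictlyRegular [Semiring K] (M : OPM A) (S : List A → K) : Prop :=
  ∃ W : WOPA A K, Restricted W ∧ ∀ w ∈ OPWords M, S w = behavior M W w

/-- Unweighted acceptance. -/
def Accepts (M : OPM A) (T : OPA A) (w : List A) : Prop :=
  ∃ qI ms qF, qI ∈ T.I ∧ qF ∈ T.F ∧ ExecList M T ⟨[], qI, w⟩ ms ⟨[], qF, []⟩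

/-- A language `L ⊆ (Σ,M)^+` is an operator precedence language if it is the set of
compatible words accepted by some OPA. -/
def IsOPL (M : OPM A) (L : Set (List A)) : Prop :=
  ∃ T : OPA A, L = {w | w ∈ OPWords M ∧ Accepts M T w}

/-- The intersection `S ∩ L` of a series with a language. -/
noncomputable def interSeries [Semiring K] (S : List A → K) (L : Set (List A))
    (w : List A) : K :=
  open Classical in if w ∈ L then S w else 0

/-- `h : Σ → Γ` is OPM-preserving: `a ⊙ b` iff `h(a) ⊙ h(b)` for every relation `⊙`. -/
def OPMPreserving (M : OPM A) (M' : OPM B) (h : A → B) : Prop :=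
  ∀ a b : A, M.rel (some a) (some b) = M'.rel (some (h a)) (some (h b))

/-- The image series `h(S)(v) = ∑_{w ∈ (Σ,M)^+, h(w) = v} S(w)`. -/
noncomputable def mapSeries [Semiring K] (M : OPM A) (h : A → B) (S : List A → K)
    (v : List B) : K :=
  ∑ᶠ w ∈ {w | w ∈ OPWords M ∧ w.map h = v}, S w

/-- The pullback OPM `h⁻¹(M)` along `h : Σ' → Σ`. -/
def pullOPM (M : OPM A) (h : B → A) : OPM B where
  rel o₁ o₂ := M.rel (o₁.map h) (o₂.map h)
  hash_lt b := M.hash_lt (h b)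
  hash_gt b := M.hash_gt (h b)

/-- The Nivat class `N(Σ,M,K)`: series obtained from a one-state restricted wOPA over a
pulled-back OP alphabet, intersected with an OPL, followed by the projection. -/
def NivatClass [Semiring K] (M : OPM A) (S : List A → K) : Prop :=
  ∃ (B : Type) (_ : Fintype B) (h : B → A) (W : WOPA B K) (L : Set (List B)),
    Restricted W ∧ (∃ q₀ : W.Q, ∀ q : W.Q, q = q₀) ∧ IsOPL (pullOPM M h) L ∧
    ∀ v ∈ OPWords M,
      S v = mapSeries (pullOPM M h) h (interSeries (behavior (pullOPM M h) W) L) v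

/-- An OPL step function: a finite sum `∑ kᵢ · 1_{Lᵢ}` with the `Lᵢ` OPLs forming a
partition of `(Σ,M)^+`. -/
def IsOPLStep [Semiring K] (M : OPM A) (S : List A → K) : Prop :=
  ∃ (n : ℕ) (k : Fin n → K) (L : Fin n → Set (List A)),
    (∀ i, IsOPL M (L i)) ∧ (∀ i j, i ≠ j → Disjoint (L i) (L j)) ∧
    (⋃ i, L i) = OPWords M ∧ ∀ i, ∀ w ∈ L i, S w = k i


section Restriction
set_option linter.unusedSectionVars false

variable [CommSemiring K]

/-- Weight of an optional (guessed) pop triple. -/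
def popWt (W : WOPA A K) : Option (W.Q × W.Q × W.Q) → K
  | none => 1
  | some t => W.wtpop t

@[simp] lemma popWt_none {W : WOPA A K} : popWt W none = 1 := rfl
@[simp] lemma popWt_some {W : WOPA A K} (t) : popWt W (some t) = W.wtpop t := rfl

/-- State space of the restricted automaton: a state together with the guessed pop
transition for the current topmost stack frame (`none` for empty stack). -/
abbrev rQ (W : WOPA A K) : Type := W.Q × Option (W.Q × W.Q × W.Q)

/-- The restricted automaton: pop weights are prepaid at push time, guessing at each
push which pop transition will eventually remove the pushed frame. -/
@[reducible] def rW (W : WOPA A K) : WOPA A K where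
  Q := rQ W
  fin := letI := W.fin; inferInstance
  I := {s | s.1 ∈ W.I ∧ s.2 = none}
  F := {s | s.1 ∈ W.F ∧ s.2 = none}
  δpush := {t | (t.1.1, t.2.1, t.2.2.1) ∈ W.δpush}
  δshift := {t | (t.1.1, t.2.1, t.2.2.1) ∈ W.δshift ∧ t.2.2.2 = t.1.2}
  δpop := {t | (t.1.1, t.2.1.1, t.2.2.1) ∈ W.δpop ∧
    t.1.2 = some (t.1.1, t.2.1.1, t.2.2.1) ∧ t.2.2.2 = t.2.1.2}
  wtpush t := W.wtpush (t.1.1, t.2.1, t.2.2.1) * popWt W t.2.2.2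
  wtshift t := W.wtshift (t.1.1, t.2.1, t.2.2.1)
  wtpop _ := 1

variable {W : WOPA A K}

def pStack (W : WOPA A K) (l : List (A × rQ W)) : List (A × W.Q) :=
  l.map fun p => (p.1, p.2.1)

@[simp] lemma pStack_nil : pStack W [] = [] := rfl
@[simp] lemma pStack_cons (p : A × rQ W) (l) :
    pStack W (p :: l) = (p.1, p.2.1) :: pStack W l := rfl

def pMove (W : WOPA A K) : Move A (rQ W) → Move A W.Q
  | .push q b r => .push q.1 b r.1
  | .shift q b r => .shift q.1 b r.1
  | .pop q p r => .pop q.1 p.1 r.1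

@[simp] lemma topSym_pStack (l : List (A × rQ W)) :
    topSym (pStack W l) = topSym l := by cases l <;> rfl

def botG (W : WOPA A K) (g : Option (W.Q × W.Q × W.Q)) (l : List (A × rQ W)) :
    Option (W.Q × W.Q × W.Q) :=
  (l.map fun p => p.2.2).getLastD g

@[simp] lemma botG_nil (g) : botG W g [] = g := rfl
@[simp] lemma botG_cons (g) (p : A × rQ W) (l) :
    botG W g (p :: l) = botG W p.2.2 l := by
  rw [botG, botG, List.map_cons, List.getLastD_cons]

def pend (W : WOPA A K) (g : Option (W.Q × W.Q × W.Q)) (l : List (A × rQ W)) : K :=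
  popWt W g * (l.map fun p => popWt W p.2.2).prod

lemma exec_proj {M : OPM A} {c d : Config A (rW W).Q} {m} (h : Exec M (rW W).toOPA c m d) :
    Exec M W.toOPA ⟨pStack W c.stack, c.state.1, c.input⟩ (pMove W m)
      ⟨pStack W d.stack, d.state.1, d.input⟩ := by
  cases h with
  | push hrel hmem =>
      exact Exec.push (by simpa using hrel) hmem
  | shift hrel hmem =>
      exact Exec.shift hrel hmem.1
  | pop hrel hmem =>
      exact Exec.pop hrel hmem.1

lemma execList_proj {M : OPM A} {c d : Config A (rW W).Q} {ms}
    (h : ExecList M (rW W).toOPA c ms d) :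
    ExecList M W.toOPA ⟨pStack W c.stack, c.state.1, c.input⟩ (ms.map (pMove W))
      ⟨pStack W d.stack, d.state.1, d.input⟩ := by
  induction h with
  | nil c => exact ExecList.nil _
  | cons hx _ ih => exact ExecList.cons (exec_proj hx) ih


lemma wt_aux {M : OPM A} {c d : Config A (rW W).Q} {ms}
    (h : ExecList M (rW W).toOPA c ms d) (h1 : d.stack = []) (h2 : d.state.2 = none) :
    (ms.map (moveWt (rW W))).prod * pend W c.state.2 c.stack
      = ((ms.map (pMove W)).map (moveWt W)).prod := by
  induction h with
  | nil c => simp [pend, h1, h2, popWt]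
  | cons hx hrest ih =>
    replace ih := ih h1 h2
    cases hx with
    | @push st q r b x hrel hmem =>
        simp only [List.map_cons, List.prod_cons, pMove, moveWt, pend, rW] at ih ⊢
        rw [← ih]; ring
    | @shift st p q r a b x hrel hmem =>
        obtain ⟨hs1, hs2⟩ := hmem
        simp only [List.map_cons, List.prod_cons, pMove, moveWt, pend, rW] at ih ⊢
        rw [hs2] at ih
        rw [← ih]; ring
    | @pop st p q r a x hrel hmem =>
        obtain ⟨hm1, hm2, hm3⟩ := hmem
        simp only [List.map_cons, List.prod_cons, pMove, moveWt, pend, rW] at ih ⊢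
        rw [show (q, p, r).2.2.2 = (q, p, r).2.1.2 from hm3] at ih
        rw [show (q, p, r).1.2 = some ((q, p, r).1.1, (q, p, r).2.1.1, (q, p, r).2.2.1) from hm2,
          popWt_some]
        rw [← ih]; ring

lemma lift_aux {M : OPM A} {c d : Config A W.Q} {ms}
    (h : ExecList M W.toOPA c ms d) (h1 : d.stack = []) (h2 : d.input = []) :
    ∃ (st' : List (A × rQ W)) (g : Option (W.Q × W.Q × W.Q)) (ms' : List (Move A (rQ W))),
      pStack W st' = c.stack ∧ botG W g st' = none ∧ ms'.map (pMove W) = ms ∧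
      ExecList M (rW W).toOPA ⟨st', (c.state, g), c.input⟩ ms' ⟨[], (d.state, none), []⟩ := by
  induction h with
  | nil c =>
      refine ⟨[], none, [], by simp [h1], rfl, rfl, ?_⟩
      rw [show c = ⟨c.stack, c.state, c.input⟩ from rfl, h1, h2]
      exact ExecList.nil _
  | cons hx hrest ih =>
    replace ih := ih h1 h2
    cases hx with
    | @push st q r b x hrel hmem =>
        obtain ⟨st1, g2, ms', hp, hb, hmm, he⟩ := ih
        cases st1 with
        | nil => simp at hp
        | cons f st0 =>
            simp only [pStack_cons, List.cons.injEq, Prod.mk.injEq] at hp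
            obtain ⟨⟨rfl, rfl⟩, hp0⟩ := hp
            refine ⟨st0, f.2.2, .push (f.2.1, f.2.2) f.1 (r, g2) :: ms', hp0, ?_,
              by simp [pMove, hmm], ?_⟩
            · simpa using hb
            · refine ExecList.cons (Exec.push ?_ hmem) he
              rw [← hp0] at hrel; simpa using hrel
    | @shift st p q r a b x hrel hmem =>
        obtain ⟨st1, g2, ms', hp, hb, hmm, he⟩ := ih
        cases st1 with
        | nil => simp at hp
        | cons f st0 =>
            simp only [pStack_cons, List.cons.injEq, Prod.mk.injEq] at hp
            obtain ⟨⟨rfl, rfl⟩, hp0⟩ := hp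
            refine ⟨(a, f.2) :: st0, g2, .shift (q, g2) f.1 (r, g2) :: ms',
              by simp [hp0], by simpa using hb, by simp [pMove, hmm], ?_⟩
            exact ExecList.cons (Exec.shift hrel ⟨hmem, rfl⟩) he
    | @pop st p q r a x hrel hmem =>
        obtain ⟨st0, g2, ms', hp, hb, hmm, he⟩ := ih
        refine ⟨(a, (p, g2)) :: st0, some (q, p, r), .pop (q, some (q, p, r)) (p, g2) (r, g2) :: ms',
          by simp [hp], by simpa using hb, by simp [pMove, hmm], ?_⟩
        exact ExecList.cons (Exec.pop hrel ⟨hmem, rfl, rfl⟩) he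

lemma inj_aux {M : OPM A} {c1 ms1 d1} (h1 : ExecList M (rW W).toOPA c1 ms1 d1) :
    ∀ {c2 : Config A (rW W).Q} {ms2 d2}, ExecList M (rW W).toOPA c2 ms2 d2 →
    pStack W c1.stack = pStack W c2.stack → c1.state.1 = c2.state.1 →
    c1.input = c2.input → ms1.map (pMove W) = ms2.map (pMove W) →
    d1.stack = [] → d2.stack = [] → d1.state.2 = none → d2.state.2 = none →
    d1.input = [] → d2.input = [] →
    c1 = c2 ∧ ms1 = ms2 ∧ d1 = d2 := by
  induction h1 with
  | nil c =>
    intro c2 ms2 d2 h2 hst hq hin hm e1 e2 e3 e4 e5 e6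
    have hms2 : ms2 = [] := by simpa using hm.symm
    subst hms2
    cases h2
    have hcc : c = c2 := by
      obtain ⟨s1, q1, i1⟩ := c
      obtain ⟨s2, q2, i2⟩ := c2
      simp only [Config.mk.injEq]
      simp only at hst hq hin e1 e2 e3 e4 e5 e6
      refine ⟨e1.trans e2.symm, Prod.ext hq (e3.trans e4.symm), hin⟩
    exact ⟨hcc, rfl, hcc⟩
  | cons hx hrest ih =>
    intro c2 ms2 d2 h2 hst hq hin hm e1 e2 e3 e4 e5 e6
    cases h2 with
    | nil => simp at hm
    | cons hx2 hrest2 =>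
      simp only [List.map_cons, List.cons.injEq] at hm
      obtain ⟨hm0, hms⟩ := hm
      cases hx with
      | @push st q r b x hrel hmem =>
        cases hx2 with
        | @push st2 q2 r2 b2 x2 hrel2 hmem2 =>
          obtain ⟨rfl, rfl⟩ : b = b2 ∧ x = x2 := by simpa using hin
          simp only at hq
          simp only [pMove, Move.push.injEq] at hm0
          obtain ⟨-, -, hr1⟩ := hm0
          obtain ⟨hc, hms', hd⟩ := ih hrest2 (by simp [hq, hst]) hr1 rfl hms e1 e2 e3 e4 e5 e6
          simp only [Config.mk.injEq, List.cons.injEq, Prod.mk.injEq] at hc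
          obtain ⟨⟨⟨-, rfl⟩, rfl⟩, rfl, -⟩ := hc
          exact ⟨rfl, by rw [hms'], hd⟩
        | shift hrel2 hmem2 => simp [pMove] at hm0
        | pop hrel2 hmem2 => simp [pMove] at hm0
      | @shift st p q r a b x hrel hmem =>
        cases hx2 with
        | push hrel2 hmem2 => simp [pMove] at hm0
        | @shift st2 p2 q2 r2 a2 b2 x2 hrel2 hmem2 =>
          obtain ⟨rfl, rfl⟩ : b = b2 ∧ x = x2 := by simpa using hin
          simp only at hq
          simp only [pStack_cons, List.cons.injEq, Prod.mk.injEq] at hst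
          obtain ⟨⟨rfl, hp1⟩, hst0⟩ := hst
          simp only [pMove, Move.shift.injEq] at hm0
          obtain ⟨-, -, hr1⟩ := hm0
          obtain ⟨hc, hms', hd⟩ := ih hrest2 (by simp [hp1, hst0]) hr1 rfl hms e1 e2 e3 e4 e5 e6
          simp only [Config.mk.injEq, List.cons.injEq, Prod.mk.injEq] at hc
          obtain ⟨⟨⟨-, rfl⟩, rfl⟩, rfl, -⟩ := hc
          have hqq : q = q2 := Prod.ext hq (hmem.2.symm.trans hmem2.2)
          subst hqq
          exact ⟨rfl, by rw [hms'], hd⟩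
        | pop hrel2 hmem2 => simp [pMove] at hm0
      | @pop st p q r a x hrel hmem =>
        cases hx2 with
        | push hrel2 hmem2 => simp [pMove] at hm0
        | shift hrel2 hmem2 => simp [pMove] at hm0
        | @pop st2 p2 q2 r2 a2 x2 hrel2 hmem2 =>
          simp only at hin hq
          subst hin
          simp only [pStack_cons, List.cons.injEq, Prod.mk.injEq] at hst
          obtain ⟨⟨rfl, hp1⟩, hst0⟩ := hst
          simp only [pMove, Move.pop.injEq] at hm0
          obtain ⟨-, -, hr1⟩ := hm0
          obtain ⟨hc, hms', hd⟩ := ih hrest2 hst0 hr1 rfl hms e1 e2 e3 e4 e5 e6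
          simp only [Config.mk.injEq, Prod.mk.injEq] at hc
          obtain ⟨rfl, rfl, -⟩ := hc
          have hpp : p = p2 := Prod.ext hp1 (hmem.2.2.symm.trans hmem2.2.2)
          have hqq : q = q2 := by
            refine Prod.ext hq ?_
            rw [hmem.2.1, hmem2.2.1, hq, hp1]
          subst hpp; subst hqq
          exact ⟨rfl, by rw [hms'], hd⟩

lemma behavior_rW (M : OPM A) (W : WOPA A K) (w : List A) :
    behavior M W w = behavior M (rW W) w := by
  refine (finsum_mem_eq_of_bijOn
    (fun ρ : rQ W × List (Move A (rQ W)) × rQ W => (ρ.1.1, ρ.2.1.map (pMove W), ρ.2.2.1))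
    ⟨?_, ?_, ?_⟩ ?_).symm
  · -- maps to
    rintro ⟨qI, ms, qF⟩ ⟨hI, hF, hex⟩
    exact ⟨hI.1, hF.1, by simpa using execList_proj hex⟩
  · -- injective
    rintro ⟨qI, ms, qF⟩ ⟨hI, hF, hex⟩ ⟨qI', ms', qF'⟩ ⟨hI', hF', hex'⟩ him
    simp only [Prod.mk.injEq] at him
    obtain ⟨h1, h2, h3⟩ := him
    have hqI : qI = qI' := Prod.ext h1 (hI.2.trans hI'.2.symm)
    obtain ⟨hc, hms, hd⟩ := inj_aux hex hex' (by rw [hqI]) (by rw [hqI]) rfl h2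
      rfl rfl hF.2 hF'.2 rfl rfl
    have hqF : qF = qF' := by simpa using hd
    simp only [Prod.mk.injEq]
    exact ⟨hqI, hms, hqF⟩
  · -- surjective
    rintro ⟨qI, ms, qF⟩ ⟨hI, hF, hex⟩
    obtain ⟨st', g, ms', hp, hb, hmm, he⟩ := lift_aux hex rfl rfl
    have hst : st' = [] := by simpa [List.map_eq_nil_iff, pStack] using hp
    subst hst
    have hg : g = none := hb
    subst hg
    exact ⟨((qI, none), ms', (qF, none)), ⟨⟨hI, rfl⟩, ⟨hF, rfl⟩, he⟩, by simp [hmm]⟩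
  · -- weights
    rintro ⟨qI, ms, qF⟩ ⟨hI, hF, hex⟩
    have h0 : qI.2 = none := hI.2
    have := wt_aux hex rfl hF.2
    simpa [pend, h0] using this

end Restriction


/-- For a commutative semiring, every wOPA has an equivalent restricted wOPA;
consequently every regular series is strictly regular. -/
theorem weighted_to_restricted {A K : Type} [Fintype A] [CommSemiring K] (M : OPM A) :
    (∀ W : WOPA A K, ∃ B : WOPA A K, Restricted B ∧
        ∀ w ∈ OPWords M, behavior M W w = behavior M B w) ∧
    (∀ S : List A → K, Regular M S → StrictlyRegular M S) := by
  constructor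
  · intro W
    exact ⟨rW W, fun t _ => rfl, fun w _ => behavior_rW M W w⟩
  · rintro S ⟨W, hW⟩
    exact ⟨rW W, fun t _ => rfl, fun w hw => (hW w hw).trans (behavior_rW M W w)⟩

end WOP
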